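/- Let 0 < σ < 1/3, 0 < s < σ/40, 0 < c < 10/σ, and let j ∈ {0,1,2,3}. There exist a constant C > 0 and N₀ ∈ ℕ (depending only on d, σ, s, c, j) such that for all N ≥ N₀, every eigen-data configuration of size N satisfying Condition R(N,s), and every real t ≥ 0: N^{−2s} Δ₂^j δ₂^t ≤ ∑_{n=2}^N ν_n Δ_n^j δ_n^t ≤ C δ₂^t (N^{4s} Δ₂^j + N^{1+s} δ₂^{ct}). -/

import Mathlib

open Finset MeasureTheory
open scoped Classical

noncomputable section

/-- The Marchenko–Pastur density `ρ_d`. -/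
def mpDensity (d x : ℝ) : ℝ :=
  if 0 < x then
    (1 / (2 * Real.pi * d)) *
      Real.sqrt (max (((1 + Real.sqrt d) ^ 2 - x) * (x - (1 - Real.sqrt d) ^ 2)) 0) / x
  else 0

/-- The quantile `γ_n`: the smallest `t` with `∫_{(-∞,t]} ρ_d = n/N`. -/
def mpQuantile (d : ℝ) (N n : ℕ) : ℝ :=
  sInf {t : ℝ | (∫ x in Set.Iic t, mpDensity d x) = (n : ℝ) / N}

/-- An eigen-data configuration of size `N`: eigenvalues `0 < λ₁ ≤ ⋯ ≤ λ_N` and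
nonnegative weights `β₁, …, β_N` with `β₁ > 0` and `∑ β_n² = 1`. -/
structure EigenData (N : ℕ) where
  lam : ℕ → ℝ
  beta : ℕ → ℝ
  lam_pos : 0 < lam 1
  lam_mono : ∀ m n, 1 ≤ m → m ≤ n → n ≤ N → lam m ≤ lam n
  beta_nonneg : ∀ n, 1 ≤ n → n ≤ N → 0 ≤ beta n
  beta_one_pos : 0 < beta 1
  beta_norm : ∑ n ∈ Finset.Icc 1 N, (beta n) ^ 2 = 1

namespace EigenData

variable {N : ℕ}

/-- `δ_n = λ₁²/λ_n²`. -/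
def δ (E : EigenData N) (n : ℕ) : ℝ := E.lam 1 ^ 2 / E.lam n ^ 2

/-- `Δ_n = λ_n - λ₁`. -/
def Δ (E : EigenData N) (n : ℕ) : ℝ := E.lam n - E.lam 1

/-- `ν_n = β_n²/β₁²`. -/
def ν (E : EigenData N) (n : ℕ) : ℝ := E.beta n ^ 2 / E.beta 1 ^ 2

/-- Condition R(N,s): delocalization, edge gaps and rigidity. -/
def CondR (d s : ℝ) (E : EigenData N) : Prop :=
  (∀ n ∈ Finset.Icc 1 N, E.beta n ≤ (N : ℝ) ^ (-1 / 2 + s / 2 : ℝ)) ∧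
  (∀ n ∈ ({1, 2, N - 1, N} : Set ℕ), (N : ℝ) ^ (-1 / 2 - s / 2 : ℝ) ≤ E.beta n) ∧
  (∀ n ∈ ({N - 1, N - 2} : Set ℕ),
    (N : ℝ) ^ (-2 / 3 - s / 2 : ℝ) ≤ E.lam N - E.lam n ∧
      E.lam N - E.lam n ≤ (N : ℝ) ^ (-2 / 3 + s / 2 : ℝ)) ∧
  (∀ n ∈ ({2, 3} : Set ℕ),
    (N : ℝ) ^ (-2 / 3 - s / 2 : ℝ) ≤ E.lam n - E.lam 1 ∧
      E.lam n - E.lam 1 ≤ (N : ℝ) ^ (-2 / 3 + s / 2 : ℝ)) ∧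
  (∀ n ∈ Finset.Icc 1 N, |E.lam n - mpQuantile d N n| ≤
    (N : ℝ) ^ (-2 / 3 + s / 2 : ℝ) * ((min n (N - n + 1) : ℕ) : ℝ) ^ (-1 / 3 : ℝ))

/-- Condition L(N,p): `λ₂/λ₃ < (λ₁/λ₂)^p`. -/
def CondL (p : ℝ) (E : EigenData N) : Prop :=
  E.lam 2 / E.lam 3 < (E.lam 1 / E.lam 2) ^ p

/-- The QR error function `E_QR(t)`. -/
def EQR (E : EigenData N) (t : ℝ) : ℝ :=
  (∑ n ∈ Finset.Icc 1 N, E.lam n ^ 2 * E.δ n ^ t * E.ν n) /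
      (∑ n ∈ Finset.Icc 1 N, E.δ n ^ t * E.ν n) -
    (∑ n ∈ Finset.Icc 1 N, E.lam n * E.δ n ^ t * E.ν n) ^ 2 /
      (∑ n ∈ Finset.Icc 1 N, E.δ n ^ t * E.ν n) ^ 2

/-- The QR halting time `T_{QR,ε} = inf {t ≥ 0 : E_QR(t) ≤ ε²}`. -/
def TQR (E : EigenData N) (ε : ℝ) : ℝ :=
  sInf {t : ℝ | 0 ≤ t ∧ E.EQR t ≤ ε ^ 2}

/-- The approximate QR halting time `T*_{QR,ε}` with `ε = N^{-α/2}`. -/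
def TstarQR (E : EigenData N) (α : ℝ) : ℝ :=
  (α * Real.log N + 2 * Real.log (E.Δ 2) + Real.log (E.ν 2)) / Real.log (E.δ 2)⁻¹

/-- The inverse power method iterate `λ_IP(t)`. -/
def lamIP (E : EigenData N) (t : ℝ) : ℝ :=
  (∑ n ∈ Finset.Icc 1 N, E.lam n ^ (-2 * t : ℝ) * E.beta n ^ 2) /
    (∑ n ∈ Finset.Icc 1 N, E.lam n ^ (-2 * t - 1 : ℝ) * E.beta n ^ 2)

/-- The inverse power method error `E_IP(t) = λ_IP(t+1)⁻¹ - λ_IP(t)⁻¹`. -/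
def EIP (E : EigenData N) (t : ℝ) : ℝ := (E.lamIP (t + 1))⁻¹ - (E.lamIP t)⁻¹

/-- The inverse power method halting time `T_{IP,ε} = inf {t ≥ 0 : E_IP(t) ≤ ε²}`. -/
def TIP (E : EigenData N) (ε : ℝ) : ℝ :=
  sInf {t : ℝ | 0 ≤ t ∧ E.EIP t ≤ ε ^ 2}

/-- The leading part `E_{IP,0}(t)` of the inverse power method error. -/
def EIP0 (E : EigenData N) (t : ℝ) : ℝ :=
  (∑ n ∈ Finset.Icc 2 N, (1 - E.δ n) * ((E.lam 1)⁻¹ - (E.lam n)⁻¹) * E.δ n ^ t * E.ν n) /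
    ((∑ n ∈ Finset.Icc 1 N, E.δ n ^ t * E.ν n) *
      (∑ n ∈ Finset.Icc 1 N, E.δ n ^ (t + 1) * E.ν n))

/-- The remainder `E_{IP,1}(t) = E_IP(t) - E_{IP,0}(t)`. -/
def EIP1 (E : EigenData N) (t : ℝ) : ℝ := E.EIP t - E.EIP0 t

/-- The approximate inverse power halting time `T*_{IP,ε}` with `ε = N^{-α/2}`. -/
def TstarIP (E : EigenData N) (α : ℝ) : ℝ :=
  (α * Real.log N + 2 * Real.log (1 - E.δ 2 ^ ((1 : ℝ) / 2)) +
      Real.log ((E.lam 2)⁻¹ + (E.lam 1)⁻¹) + Real.log (E.ν 2)) / Real.log (E.δ 2)⁻¹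

end EigenData

end

noncomputable section MPAux

variable (d : ℝ)

def mpL : ℝ := (1 - Real.sqrt d) ^ 2
def mpU : ℝ := (1 + Real.sqrt d) ^ 2
def mpF (t : ℝ) : ℝ := ∫ x in Set.Iic t, mpDensity d x
def mpR : ℝ := 1 / (Real.pi * Real.sqrt d * mpL d)
def mpK1 : ℝ := Real.sqrt (Real.sqrt d) / (Real.pi * d * mpL d)
def mpK2 : ℝ := Real.sqrt (Real.sqrt d) / (32 * Real.pi * d)

variable {d}

lemma sd_pos (hd0 : 0 < d) : 0 < Real.sqrt d := Real.sqrt_pos.2 hd0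
lemma sd_lt_one (hd0 : 0 < d) (hd1 : d < 1) : Real.sqrt d < 1 := by
  have := Real.sqrt_lt_sqrt hd0.le hd1
  simpa using this
lemma mpL_pos (hd0 : 0 < d) (hd1 : d < 1) : 0 < mpL d := by
  have h := sd_lt_one hd0 hd1
  have : 0 < 1 - Real.sqrt d := by linarith
  unfold mpL; positivity
lemma mpU_lt_four (hd0 : 0 < d) (hd1 : d < 1) : mpU d < 4 := by
  have h1 := sd_lt_one hd0 hd1
  have h0 := Real.sqrt_nonneg d
  unfold mpU; nlinarith
lemma mpL_lt_one (hd0 : 0 < d) (hd1 : d < 1) : mpL d < 1 := by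
  have h1 := sd_lt_one hd0 hd1
  have h0 := sd_pos hd0
  unfold mpL; nlinarith

lemma mpU_sub_mpL : mpU d - mpL d = 4 * Real.sqrt d := by unfold mpU mpL; ring

lemma mpDensity_nonneg (hd0 : 0 < d) (x : ℝ) : 0 ≤ mpDensity d x := by
  unfold mpDensity
  split
  · have hπ := Real.pi_pos
    rename_i hx
    positivity
  · exact le_refl 0

lemma mpDensity_eq_zero_of_ge (hx : mpU d ≤ x) : mpDensity d x = 0 := by
  unfold mpDensity
  split
  · rename_i hx0
    have : ((1 + Real.sqrt d) ^ 2 - x) * (x - (1 - Real.sqrt d) ^ 2) ≤ 0 := by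
      have h1 : (1 + Real.sqrt d)^2 - x ≤ 0 := by unfold mpU at hx; linarith
      have h2 : 0 ≤ x - (1 - Real.sqrt d)^2 := by
        have : (1 - Real.sqrt d)^2 ≤ (1 + Real.sqrt d)^2 := by
          have := Real.sqrt_nonneg d; nlinarith
        unfold mpU at hx; linarith
      exact mul_nonpos_of_nonpos_of_nonneg h1 h2
    rw [max_eq_right this, Real.sqrt_zero]
    simp
  · rfl

lemma mpDensity_eq_zero_of_le (hx : x ≤ mpL d) : mpDensity d x = 0 := by
  unfold mpDensity
  split
  · rename_i hx0
    have : ((1 + Real.sqrt d) ^ 2 - x) * (x - (1 - Real.sqrt d) ^ 2) ≤ 0 := by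
      have h2 : x - (1 - Real.sqrt d)^2 ≤ 0 := by unfold mpL at hx; linarith
      have h1 : 0 ≤ (1 + Real.sqrt d)^2 - x := by
        have hle : (1 - Real.sqrt d)^2 ≤ (1 + Real.sqrt d)^2 := by
          have := Real.sqrt_nonneg d; nlinarith
        unfold mpL at hx; linarith
      exact mul_nonpos_of_nonneg_of_nonpos h1 h2
    rw [max_eq_right this, Real.sqrt_zero]
    simp
  · rfl

lemma mpDensity_le (hd0 : 0 < d) (hd1 : d < 1) (x : ℝ) : mpDensity d x ≤ mpR d := by
  have hπ := Real.pi_pos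
  have hsd := sd_pos hd0
  have hL := mpL_pos hd0 hd1
  have hRpos : 0 < mpR d := by unfold mpR; positivity
  rcases le_or_gt x (mpL d) with h | h
  · rw [mpDensity_eq_zero_of_le h]; exact hRpos.le
  rcases le_or_gt (mpU d) x with h' | h'
  · rw [mpDensity_eq_zero_of_ge h']; exact hRpos.le
  have hx0 : 0 < x := lt_trans hL h
  unfold mpDensity
  rw [if_pos hx0]
  have hsqrt : Real.sqrt (max (((1 + Real.sqrt d) ^ 2 - x) * (x - (1 - Real.sqrt d) ^ 2)) 0)
      ≤ 2 * Real.sqrt d := by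
    rw [show (2 * Real.sqrt d) = Real.sqrt ((2*Real.sqrt d)^2) by
      rw [Real.sqrt_sq (by positivity)]]
    apply Real.sqrt_le_sqrt
    have hx1 : x - (1 - Real.sqrt d)^2 = x - mpL d := by unfold mpL; ring
    have hx2 : (1 + Real.sqrt d)^2 - x = mpU d - x := by unfold mpU; ring
    have hd4 : (2 * Real.sqrt d)^2 = 4 * Real.sqrt d * Real.sqrt d := by ring
    rw [max_le_iff]
    constructor
    · have hUL := mpU_sub_mpL (d := d)
      nlinarith [sq_nonneg (mpU d + mpL d - 2*x)]
    · positivity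
  calc 1 / (2 * Real.pi * d) *
      Real.sqrt (max (((1 + Real.sqrt d) ^ 2 - x) * (x - (1 - Real.sqrt d) ^ 2)) 0) / x
      ≤ 1 / (2 * Real.pi * d) * (2 * Real.sqrt d) / mpL d := by
        apply div_le_div₀ (by positivity) (by apply mul_le_mul_of_nonneg_left hsqrt (by positivity)) hL h.le
    _ = mpR d := by
        unfold mpR
        rw [div_eq_div_iff (by positivity) (by positivity)]
        have : Real.sqrt d * Real.sqrt d = d := Real.mul_self_sqrt hd0.le
        field_simp
        linear_combination this


lemma mpK1_pos (hd0 : 0 < d) (hd1 : d < 1) : 0 < mpK1 d := by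
  have hπ := Real.pi_pos; have hL := mpL_pos hd0 hd1; have := sd_pos hd0
  unfold mpK1; positivity
lemma mpK2_pos (hd0 : 0 < d) : 0 < mpK2 d := by
  have hπ := Real.pi_pos; have := sd_pos hd0
  unfold mpK2; positivity

/-- upper bound near left edge -/
lemma mpDensity_le_edge (hd0 : 0 < d) (hd1 : d < 1) {h x : ℝ} (hh : 0 ≤ h)
    (hx1 : mpL d < x) (hx2 : x ≤ mpL d + h) :
    mpDensity d x ≤ mpK1 d * Real.sqrt h := by
  have hπ := Real.pi_pos
  have hsd := sd_pos hd0
  have hL := mpL_pos hd0 hd1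
  rcases le_or_gt (mpU d) x with h' | h'
  · rw [mpDensity_eq_zero_of_ge h']
    have : 0 < mpK1 d := mpK1_pos hd0 hd1
    positivity
  have hx0 : 0 < x := lt_trans hL hx1
  unfold mpDensity
  rw [if_pos hx0]
  have hsqrt : Real.sqrt (max (((1 + Real.sqrt d) ^ 2 - x) * (x - (1 - Real.sqrt d) ^ 2)) 0)
      ≤ 2 * Real.sqrt (Real.sqrt d) * Real.sqrt h := by
    have heq : 2 * Real.sqrt (Real.sqrt d) * Real.sqrt h = Real.sqrt (4 * Real.sqrt d * h) := by
      rw [show 4 * Real.sqrt d * h = (2:ℝ)^2 * (Real.sqrt d * h) by ring, Real.sqrt_mul (by norm_num),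
        Real.sqrt_sq (by norm_num : (0:ℝ) ≤ 2), Real.sqrt_mul (Real.sqrt_nonneg d)]
      ring
    rw [heq]
    apply Real.sqrt_le_sqrt
    have hx1' : x - (1 - Real.sqrt d)^2 = x - mpL d := by unfold mpL; ring
    have hx2' : (1 + Real.sqrt d)^2 - x = mpU d - x := by unfold mpU; ring
    rw [max_le_iff]
    have hUL := mpU_sub_mpL (d := d)
    constructor
    · rw [hx1', hx2']
      have hA : mpU d - x ≤ 4 * Real.sqrt d := by linarith
      have hB : x - mpL d ≤ h := by linarith
      have hBp : 0 ≤ x - mpL d := by linarith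
      nlinarith
    · positivity
  calc 1 / (2 * Real.pi * d) *
      Real.sqrt (max (((1 + Real.sqrt d) ^ 2 - x) * (x - (1 - Real.sqrt d) ^ 2)) 0) / x
      ≤ 1 / (2 * Real.pi * d) * (2 * Real.sqrt (Real.sqrt d) * Real.sqrt h) / mpL d := by
        apply div_le_div₀ (by positivity)
          (mul_le_mul_of_nonneg_left hsqrt (by positivity)) hL hx1.le
    _ = mpK1 d * Real.sqrt h := by
        unfold mpK1; field_simp

/-- lower bound near left edge -/
lemma mpDensity_ge_edge (hd0 : 0 < d) (hd1 : d < 1) {h x : ℝ} (hh0 : 0 < h)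
    (hh1 : h ≤ Real.sqrt d) (hx1 : mpL d + h/2 ≤ x) (hx2 : x ≤ mpL d + h) :
    Real.sqrt (Real.sqrt d) / (16 * Real.pi * d) * Real.sqrt h ≤ mpDensity d x := by
  have hπ := Real.pi_pos
  have hsd := sd_pos hd0
  have hL := mpL_pos hd0 hd1
  have hUL := mpU_sub_mpL (d := d)
  have hx0 : 0 < x := by linarith
  have hxU : x < 4 := by
    have := mpL_lt_one hd0 hd1
    have := sd_lt_one hd0 hd1
    linarith
  unfold mpDensity
  rw [if_pos hx0]
  have hprod : Real.sqrt d * h / 2 ≤ ((1 + Real.sqrt d) ^ 2 - x) * (x - (1 - Real.sqrt d) ^ 2) := by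
    have hx1' : x - (1 - Real.sqrt d)^2 = x - mpL d := by unfold mpL; ring
    have hx2' : (1 + Real.sqrt d)^2 - x = mpU d - x := by unfold mpU; ring
    rw [hx1', hx2']
    have hA : Real.sqrt d ≤ mpU d - x := by linarith
    have hB : h/2 ≤ x - mpL d := by linarith
    nlinarith
  have hmax : max (((1 + Real.sqrt d) ^ 2 - x) * (x - (1 - Real.sqrt d) ^ 2)) 0
      = ((1 + Real.sqrt d) ^ 2 - x) * (x - (1 - Real.sqrt d) ^ 2) := by
    apply max_eq_left; nlinarith
  rw [hmax]
  have hsqrt : Real.sqrt (Real.sqrt d) * Real.sqrt h / 2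
      ≤ Real.sqrt (((1 + Real.sqrt d) ^ 2 - x) * (x - (1 - Real.sqrt d) ^ 2)) := by
    have h2 : Real.sqrt (Real.sqrt d * h / 2) ≤
        Real.sqrt (((1 + Real.sqrt d) ^ 2 - x) * (x - (1 - Real.sqrt d) ^ 2)) :=
      Real.sqrt_le_sqrt hprod
    refine le_trans ?_ h2
    have e1 : Real.sqrt (Real.sqrt d * h / 2) = Real.sqrt (Real.sqrt d) * Real.sqrt h / Real.sqrt 2 := by
      rw [Real.sqrt_div (by positivity), Real.sqrt_mul (by positivity)]
    rw [e1]
    have h4 : Real.sqrt 2 ≤ 2 := by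
      nlinarith [Real.sq_sqrt (show (0:ℝ) ≤ 2 by norm_num), Real.sqrt_nonneg 2]
    apply div_le_div_of_nonneg_left (by positivity) (by positivity) h4
  calc Real.sqrt (Real.sqrt d) / (16 * Real.pi * d) * Real.sqrt h
      = (1 / (2 * Real.pi * d)) * (Real.sqrt (Real.sqrt d) * Real.sqrt h / 2) / 4 := by
        field_simp; ring
    _ ≤ (1 / (2 * Real.pi * d)) *
        Real.sqrt (((1 + Real.sqrt d) ^ 2 - x) * (x - (1 - Real.sqrt d) ^ 2)) / x := by
        apply div_le_div₀ (by positivity)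
          (mul_le_mul_of_nonneg_left hsqrt (by positivity)) hx0 hxU.le

lemma mpDensity_measurable : Measurable (mpDensity d) := by
  unfold mpDensity
  apply Measurable.ite (measurableSet_lt measurable_const measurable_id)
  · fun_prop
  · exact measurable_const

lemma mpDensity_integrable (hd0 : 0 < d) (hd1 : d < 1) : Integrable (mpDensity d) := by
  have hπ := Real.pi_pos
  have hL := mpL_pos hd0 hd1
  have hsd := sd_pos hd0
  have hRpos : 0 < mpR d := by unfold mpR; positivity
  refine Integrable.mono' (g := (Set.Icc (mpL d) (mpU d)).indicator fun _ => mpR d)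
    ?_ (mpDensity_measurable).aestronglyMeasurable ?_
  · rw [integrable_indicator_iff measurableSet_Icc]
    exact integrableOn_const measure_Icc_lt_top.ne
  · filter_upwards with x
    rw [Real.norm_of_nonneg (mpDensity_nonneg hd0 x), Set.indicator_apply]
    split
    · exact mpDensity_le hd0 hd1 x
    · rename_i hx
      rw [Set.mem_Icc, not_and_or] at hx
      rcases hx with hx | hx
      · rw [mpDensity_eq_zero_of_le (le_of_not_ge hx)]
      · rw [mpDensity_eq_zero_of_ge (le_of_not_ge hx)]

lemma mpF_nonneg (hd0 : 0 < d) (t : ℝ) : 0 ≤ mpF d t :=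
  setIntegral_nonneg measurableSet_Iic fun x _ => mpDensity_nonneg hd0 x

lemma mpF_mono (hd0 : 0 < d) (hd1 : d < 1) : Monotone (mpF d) := by
  intro a b hab
  apply setIntegral_mono_set (mpDensity_integrable hd0 hd1).integrableOn
    (Filter.Eventually.of_forall fun x => mpDensity_nonneg hd0 x)
    (HasSubset.Subset.eventuallyLE (Set.Iic_subset_Iic.2 hab))

lemma mpF_diff (hd0 : 0 < d) (hd1 : d < 1) {a b : ℝ} (hab : a ≤ b) :
    mpF d b = mpF d a + ∫ x in Set.Ioc a b, mpDensity d x := by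
  unfold mpF
  rw [← Set.Iic_union_Ioc_eq_Iic hab]
  exact setIntegral_union (Set.Iic_disjoint_Ioc le_rfl) measurableSet_Ioc
    (mpDensity_integrable hd0 hd1).integrableOn (mpDensity_integrable hd0 hd1).integrableOn

lemma mpF_L (hd0 : 0 < d) (hd1 : d < 1) : mpF d (mpL d) = 0 := by
  unfold mpF
  rw [setIntegral_congr_fun measurableSet_Iic (g := fun _ => (0:ℝ))
    (fun x hx => mpDensity_eq_zero_of_le hx)]
  simp

lemma mpF_lip (hd0 : 0 < d) (hd1 : d < 1) {a b : ℝ} (hab : a ≤ b) :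
    mpF d b - mpF d a ≤ mpR d * (b - a) := by
  rw [mpF_diff hd0 hd1 hab]
  have : (∫ x in Set.Ioc a b, mpDensity d x) ≤ ∫ _x in Set.Ioc a b, mpR d := by
    apply setIntegral_mono_on (mpDensity_integrable hd0 hd1).integrableOn
      (integrableOn_const measure_Ioc_lt_top.ne) measurableSet_Ioc
      (fun x _ => mpDensity_le hd0 hd1 x)
  have hconst : (∫ _x in Set.Ioc a b, mpR d) = (b - a) * mpR d := by
    rw [setIntegral_const, measureReal_def, Real.volume_Ioc, smul_eq_mul, ENNReal.toReal_ofReal (by linarith)]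
  linarith [this, hconst ▸ this]

lemma mpF_cont (hd0 : 0 < d) (hd1 : d < 1) : Continuous (mpF d) := by
  have hπ := Real.pi_pos
  have hL := mpL_pos hd0 hd1
  have hsd := sd_pos hd0
  have hRpos : 0 < mpR d := by unfold mpR; positivity
  apply LipschitzWith.continuous (K := Real.toNNReal (mpR d)) ?_
  apply LipschitzWith.of_dist_le_mul
  intro a b
  rw [Real.dist_eq, Real.dist_eq, Real.coe_toNNReal _ hRpos.le]
  rcases le_total a b with hab | hab
  · have h1 := mpF_lip hd0 hd1 hab
    have h2 := mpF_mono hd0 hd1 hab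
    rw [abs_of_nonpos (by linarith), abs_of_nonpos (by linarith)]
    linarith
  · have h1 := mpF_lip hd0 hd1 hab
    have h2 := mpF_mono hd0 hd1 hab
    rw [abs_of_nonneg (by linarith), abs_of_nonneg (by linarith)]
    linarith

lemma mpF_const_above (hd0 : 0 < d) (hd1 : d < 1) {t : ℝ} (ht : mpU d ≤ t) :
    mpF d t = mpF d (mpU d) := by
  rw [mpF_diff hd0 hd1 ht]
  rw [setIntegral_congr_fun measurableSet_Ioc (g := fun _ => (0:ℝ))
    (fun x hx => mpDensity_eq_zero_of_ge (le_of_lt hx.1))]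
  simp

lemma mpF_upper (hd0 : 0 < d) (hd1 : d < 1) {h : ℝ} (hh : 0 ≤ h) :
    mpF d (mpL d + h) ≤ mpK1 d * (h * Real.sqrt h) := by
  rw [mpF_diff hd0 hd1 (by linarith : mpL d ≤ mpL d + h), mpF_L hd0 hd1, zero_add]
  have hbd : (∫ x in Set.Ioc (mpL d) (mpL d + h), mpDensity d x)
      ≤ ∫ _x in Set.Ioc (mpL d) (mpL d + h), mpK1 d * Real.sqrt h := by
    apply setIntegral_mono_on (mpDensity_integrable hd0 hd1).integrableOn
      (integrableOn_const measure_Ioc_lt_top.ne) measurableSet_Ioc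
      (fun x hx => mpDensity_le_edge hd0 hd1 hh hx.1 hx.2)
  have hconst : (∫ _x in Set.Ioc (mpL d) (mpL d + h), mpK1 d * Real.sqrt h)
      = h * (mpK1 d * Real.sqrt h) := by
    rw [setIntegral_const, measureReal_def, Real.volume_Ioc, smul_eq_mul,
      ENNReal.toReal_ofReal (by linarith : (0:ℝ) ≤ mpL d + h - mpL d),
      show mpL d + h - mpL d = h by ring]
  rw [hconst] at hbd
  linarith [hbd]

lemma mpF_lower (hd0 : 0 < d) (hd1 : d < 1) {h : ℝ} (hh0 : 0 < h) (hh1 : h ≤ Real.sqrt d) :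
    mpK2 d * (h * Real.sqrt h) ≤ mpF d (mpL d + h) := by
  have hsub : Set.Icc (mpL d + h/2) (mpL d + h) ⊆ Set.Iic (mpL d + h) := fun x hx => hx.2
  have key : (∫ x in Set.Icc (mpL d + h/2) (mpL d + h), mpDensity d x) ≤ mpF d (mpL d + h) := by
    unfold mpF
    exact setIntegral_mono_set (mpDensity_integrable hd0 hd1).integrableOn
      (Filter.Eventually.of_forall fun x => mpDensity_nonneg hd0 x)
      (HasSubset.Subset.eventuallyLE hsub)
  refine le_trans ?_ key
  have hbd : (∫ _x in Set.Icc (mpL d + h/2) (mpL d + h),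
        Real.sqrt (Real.sqrt d) / (16 * Real.pi * d) * Real.sqrt h)
      ≤ ∫ x in Set.Icc (mpL d + h/2) (mpL d + h), mpDensity d x := by
    apply setIntegral_mono_on (integrableOn_const measure_Icc_lt_top.ne)
      (mpDensity_integrable hd0 hd1).integrableOn measurableSet_Icc
      (fun x hx => mpDensity_ge_edge hd0 hd1 hh0 hh1 hx.1 hx.2)
  refine le_trans (le_of_eq ?_) hbd
  rw [setIntegral_const, measureReal_def, Real.volume_Icc, smul_eq_mul,
    ENNReal.toReal_ofReal (by linarith : (0:ℝ) ≤ mpL d + h - (mpL d + h/2)),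
    show mpL d + h - (mpL d + h/2) = h/2 by ring]
  unfold mpK2
  field_simp
  ring

lemma mpQuantile_eq (N n : ℕ) : mpQuantile d N n = sInf {t : ℝ | mpF d t = (n : ℝ) / N} := rfl

lemma mp_mem_lower (hd0 : 0 < d) (hd1 : d < 1) {N n : ℕ} (hn : 1 ≤ n) (hN : 1 ≤ N)
    {t : ℝ} (ht : mpF d t = (n : ℝ) / N) : mpL d ≤ t := by
  by_contra hlt
  push_neg at hlt
  have h1 : mpF d t ≤ mpF d (mpL d) := mpF_mono hd0 hd1 hlt.le
  rw [mpF_L hd0 hd1] at h1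
  have h2 : (0:ℝ) < (n : ℝ) / N := by
    apply div_pos (by exact_mod_cast hn) (by exact_mod_cast hN)
  rw [ht] at h1
  linarith

lemma mp_bddBelow (hd0 : 0 < d) (hd1 : d < 1) {N n : ℕ} (hn : 1 ≤ n) (hN : 1 ≤ N) :
    BddBelow {t : ℝ | mpF d t = (n : ℝ) / N} :=
  ⟨mpL d, fun t ht => mp_mem_lower hd0 hd1 hn hN ht⟩

lemma mpQ_empty (hd0 : 0 < d) {N n : ℕ}
    (h : ¬ {t : ℝ | mpF d t = (n : ℝ) / N}.Nonempty) : mpQuantile d N n = 0 := by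
  rw [mpQuantile_eq, Set.not_nonempty_iff_eq_empty.1 h, Real.sInf_empty]

lemma mpQ_near (hd0 : 0 < d) (hd1 : d < 1) {N n : ℕ} (hn : 1 ≤ n) (hN : 1 ≤ N)
    (hne : {t : ℝ | mpF d t = (n : ℝ) / N}.Nonempty) {ε : ℝ} (hε : 0 < ε) :
    ∃ t', mpF d t' = (n : ℝ) / N ∧ mpL d ≤ t' ∧ t' < mpQuantile d N n + ε := by
  obtain ⟨t', ht', hlt⟩ := Real.lt_sInf_add_pos hne hε
  exact ⟨t', ht', mp_mem_lower hd0 hd1 hn hN ht', by rw [mpQuantile_eq]; exact hlt⟩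

lemma mpQ_ge (hd0 : 0 < d) (hd1 : d < 1) {N n : ℕ} (hn : 1 ≤ n) (hN : 1 ≤ N)
    (hne : {t : ℝ | mpF d t = (n : ℝ) / N}.Nonempty) : mpL d ≤ mpQuantile d N n := by
  rw [mpQuantile_eq]
  exact le_csInf hne fun t ht => mp_mem_lower hd0 hd1 hn hN ht

lemma mpQ_le_U (hd0 : 0 < d) (hd1 : d < 1) {N n : ℕ} (hn : 1 ≤ n) (hN : 1 ≤ N)
    (hne : {t : ℝ | mpF d t = (n : ℝ) / N}.Nonempty) : mpQuantile d N n ≤ mpU d := by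
  obtain ⟨t, ht⟩ := hne
  rcases le_or_gt t (mpU d) with h | h
  · exact le_trans (by rw [mpQuantile_eq]; exact csInf_le (mp_bddBelow hd0 hd1 hn hN) ht) h
  · have : mpF d (mpU d) = (n:ℝ)/N := by
      rw [← mpF_const_above hd0 hd1 h.le]; exact ht
    rw [mpQuantile_eq]
    exact csInf_le (mp_bddBelow hd0 hd1 hn hN) this

lemma mpQ_one (hd0 : 0 < d) (hd1 : d < 1) {N : ℕ} (hN : 1 ≤ N) {h : ℝ} (hh0 : 0 < h)
    (hh1 : h ≤ Real.sqrt d) (hge : 1 / (N : ℝ) ≤ mpK2 d * (h * Real.sqrt h)) :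
    mpL d ≤ mpQuantile d N 1 ∧ mpQuantile d N 1 ≤ mpL d + h := by
  have hmem : (1 : ℝ) / N ∈ Set.Icc (mpF d (mpL d)) (mpF d (mpL d + h)) := by
    constructor
    · rw [mpF_L hd0 hd1]; positivity
    · exact le_trans hge (mpF_lower hd0 hd1 hh0 hh1)
  have := intermediate_value_Icc (by linarith : mpL d ≤ mpL d + h)
    ((mpF_cont hd0 hd1).continuousOn)
  obtain ⟨x, hx, hfx⟩ := this hmem
  have hne : {t : ℝ | mpF d t = ((1:ℕ) : ℝ) / N}.Nonempty := ⟨x, by simpa using hfx⟩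
  refine ⟨by simpa using mpQ_ge hd0 hd1 le_rfl hN hne, ?_⟩
  have : mpQuantile d N 1 ≤ x := by
    rw [mpQuantile_eq]
    exact csInf_le (mp_bddBelow hd0 hd1 le_rfl hN) (by simpa using hfx)
  exact le_trans this hx.2

lemma rpow_one_add_le {r p : ℝ} (hr : 0 ≤ r) (hp : 0 ≤ p) (hpr : p * r ≤ 1) :
    (1 + r) ^ (p : ℝ) ≤ 1 + 3 * (p * r) := by
  have h1 : (1+r) ^ (p:ℝ) = Real.exp (Real.log (1+r) * p) := Real.rpow_def_of_pos (by linarith) p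
  have hlog : Real.log (1+r) ≤ r := by
    have := Real.log_le_sub_one_of_pos (show (0:ℝ) < 1+r by linarith)
    linarith
  have hlog0 : 0 ≤ Real.log (1+r) := Real.log_nonneg (by linarith)
  have h3 : Real.exp (Real.log (1+r) * p) ≤ Real.exp (p*r) := by
    apply Real.exp_le_exp.2
    calc Real.log (1+r) * p ≤ r * p := mul_le_mul_of_nonneg_right hlog hp
      _ = p * r := by ring
  have key : Real.exp (p*r) ≤ 1 + 3 * (p*r) := by
    set x := p * r with hx
    have hx0 : 0 ≤ x := mul_nonneg hp hr
    have hneg : 1 - x ≤ Real.exp (-x) := by have := Real.add_one_le_exp (-x); linarith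
    have hmul : (1 - x) * Real.exp x ≤ 1 := by
      calc (1-x) * Real.exp x ≤ Real.exp (-x) * Real.exp x :=
            mul_le_mul_of_nonneg_right hneg (Real.exp_nonneg x)
        _ = 1 := by rw [← Real.exp_add]; simp
    have hex : Real.exp x ≤ Real.exp 1 := Real.exp_le_exp.2 hpr
    have he3 : Real.exp 1 ≤ 3 := by have := Real.exp_one_lt_d9; linarith
    nlinarith [Real.exp_pos x]
  rw [h1]; exact le_trans h3 key

lemma lam_bound {a b x p : ℝ} (ha : 0 < a) (hb : 0 < b) (hx : 0 < x) (hp : 0 ≤ p)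
    (hyp : (a^2/b^2 : ℝ) ^ (p:ℝ) ≤ a^2/x^2) : x ≤ a * (b/a) ^ (p:ℝ) := by
  have e1 : (a^2/b^2) = (a/b)^(2:ℕ) := by rw [div_pow]
  have e2 : (a^2/x^2) = (a/x)^(2:ℕ) := by rw [div_pow]
  rw [e1, e2] at hyp
  have hab : (0:ℝ) ≤ a/b := div_nonneg ha.le hb.le
  have e3 : (((a/b)^(2:ℕ) : ℝ))^(p:ℝ) = ((a/b)^(p:ℝ))^(2:ℕ) := by
    rw [← Real.rpow_natCast (a/b) 2, ← Real.rpow_mul hab, mul_comm,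
      Real.rpow_mul hab, Real.rpow_natCast]
  rw [e3] at hyp
  have h5 : 0 ≤ (a/b)^(p:ℝ) := Real.rpow_nonneg hab p
  have h4 : (a/b)^(p:ℝ) ≤ a/x :=
    (pow_le_pow_iff_left₀ h5 (div_nonneg ha.le hx.le) (by norm_num)).1 hyp
  have hpos : 0 < (a/b)^(p:ℝ) := Real.rpow_pos_of_pos (by positivity) p
  have h6 : (a/b)^(p:ℝ) * x ≤ a := (le_div_iff₀ hx).1 h4
  have h7 : x ≤ a / (a/b)^(p:ℝ) := by rw [le_div_iff₀ hpos]; linarith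
  have h8 : a / (a/b)^(p:ℝ) = a * (b/a)^(p:ℝ) := by
    rw [div_eq_mul_inv, ← Real.inv_rpow hab, inv_div]
  rw [h8] at h7
  exact h7

lemma eventually_rpow_le {e C : ℝ} (he : e < 0) (hC : 0 < C) :
    ∀ᶠ N : ℕ in Filter.atTop, (N:ℝ) ^ e ≤ C := by
  have h1 : Filter.Tendsto (fun x : ℝ => x ^ e) Filter.atTop (nhds 0) := by
    have := tendsto_rpow_neg_atTop (show 0 < -e by linarith)
    simpa using this
  have h2 : Filter.Tendsto (fun N : ℕ => (N:ℝ) ^ e) Filter.atTop (nhds 0) :=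
    h1.comp tendsto_natCast_atTop_atTop
  exact (h2.eventually (eventually_le_nhds hC))

end MPAux

set_option maxHeartbeats 1000000 in
/-- Key sum estimate: given Condition R(N,s), for `j ≤ 3`,
`N^{-2s} Δ₂^j δ₂^t ≤ ∑_{n=2}^N ν_n Δ_n^j δ_n^t ≤ C δ₂^t (N^{4s} Δ₂^j + N^{1+s} δ₂^{ct})`. -/
theorem weighted_sum_estimate (d σ s c : ℝ) (j : ℕ)
    (hd0 : 0 < d) (hd1 : d < 1)
    (hσ0 : 0 < σ) (hσ1 : σ < 1 / 3)
    (hs0 : 0 < s) (hs1 : s < σ / 40)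
    (hc0 : 0 < c) (hc1 : c < 10 / σ) (hj : j ≤ 3) :
    ∃ C > 0, ∃ N₀ : ℕ, ∀ N : ℕ, N₀ ≤ N → ∀ E : EigenData N, E.CondR d s →
      ∀ t : ℝ, 0 ≤ t →
        (N : ℝ) ^ (-2 * s) * E.Δ 2 ^ j * E.δ 2 ^ t ≤
            ∑ n ∈ Finset.Icc 2 N, E.ν n * E.Δ n ^ j * E.δ n ^ t ∧
          ∑ n ∈ Finset.Icc 2 N, E.ν n * E.Δ n ^ j * E.δ n ^ t ≤
            C * E.δ 2 ^ t *
              ((N : ℝ) ^ (4 * s) * E.Δ 2 ^ j + (N : ℝ) ^ (1 + s) * E.δ 2 ^ (c * t)) := by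
  have hπ := Real.pi_pos
  have hsd : 0 < Real.sqrt d := sd_pos hd0
  have hsd1 : Real.sqrt d < 1 := sd_lt_one hd0 hd1
  have hL : 0 < mpL d := mpL_pos hd0 hd1
  have hU4 : mpU d < 4 := mpU_lt_four hd0 hd1
  have hK1 : 0 < mpK1 d := mpK1_pos hd0 hd1
  have hK2 : 0 < mpK2 d := mpK2_pos hd0
  set p : ℝ := 1 + c with hp
  have hp1 : 1 ≤ p := by rw [hp]; linarith
  have hp0 : 0 < p := lt_of_lt_of_le one_pos hp1
  set D : ℝ := (mpK2 d) ^ (-(2/3) : ℝ) + 6 + 3 * c with hD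
  have hD0 : 0 < D := by
    have : 0 < (mpK2 d) ^ (-(2/3) : ℝ) := Real.rpow_pos_of_pos hK2 _
    rw [hD]; linarith
  set C1 : ℝ := mpK1 d * D ^ ((3:ℝ)/2) * (3*p)^3 with hC1
  have hC1pos : 0 < C1 := by
    have : 0 < D ^ ((3:ℝ)/2) := Real.rpow_pos_of_pos hD0 _
    rw [hC1]; positivity
  refine ⟨C1 + 125, by linarith, ?_⟩
  set e : ℝ := -2 / 3 + s / 2 with he
  have hs4 : s < 1/120 := by linarith
  have hee : e < 0 := by rw [he]; linarith
  have hevA : ∀ᶠ n : ℕ in Filter.atTop, 2 ≤ n := Filter.eventually_ge_atTop 2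
  have hevB := eventually_rpow_le hee (show (0:ℝ) < mpL d / 4 by linarith)
  have hevC := eventually_rpow_le hee one_pos
  have hevD := eventually_rpow_le hee (show (0:ℝ) < (3 * mpL d / 4) / p by positivity)
  have hevE0 : (0:ℝ) < Real.sqrt d * (mpK2 d) ^ ((2:ℝ)/3) := by
    have : 0 < (mpK2 d) ^ ((2:ℝ)/3) := Real.rpow_pos_of_pos hK2 _
    positivity
  have hevE := eventually_rpow_le (show (-(2/3):ℝ) < 0 by norm_num) hevE0
  have hev := ((hevA.and hevB).and (hevC.and hevD)).and hevE
  obtain ⟨N₀, hN₀⟩ := Filter.eventually_atTop.1 hev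
  refine ⟨N₀, fun N hN E hR t ht => ?_⟩
  obtain ⟨⟨⟨hN2, hP2⟩, hP3, hP4⟩, hP5⟩ := hN₀ N hN
  obtain ⟨h1, h2, h3, h4, h5⟩ := hR
  clear hev hevA hevB hevC hevD hevE hevE0 hN₀ hN
  have hN1 : 1 ≤ N := le_trans one_le_two hN2
  have hNR1 : (1:ℝ) ≤ (N:ℝ) := by exact_mod_cast hN1
  have hNR0 : (0:ℝ) < (N:ℝ) := by linarith
  have hNe0 : 0 < (N:ℝ) ^ e := Real.rpow_pos_of_pos hNR0 e
  have hlam1 : 0 < E.lam 1 := E.lam_pos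
  have hlammono : ∀ n, 2 ≤ n → n ≤ N → E.lam 1 ≤ E.lam n := fun n h2n hnN =>
    E.lam_mono 1 n le_rfl (le_trans one_le_two h2n) hnN
  -- rigidity simplified
  have rig : ∀ n, 1 ≤ n → n ≤ N → |E.lam n - mpQuantile d N n| ≤ (N:ℝ) ^ e := by
    intro n h1n hnN
    refine le_trans (h5 n (Finset.mem_Icc.2 ⟨h1n, hnN⟩)) ?_
    have hmin : (1:ℝ) ≤ ((min n (N - n + 1) : ℕ) : ℝ) := by
      have : 1 ≤ min n (N - n + 1) := le_min h1n (Nat.le_add_left 1 _)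
      exact_mod_cast this
    have hfac : ((min n (N - n + 1) : ℕ) : ℝ) ^ (-1/3 : ℝ) ≤ 1 :=
      Real.rpow_le_one_of_one_le_of_nonpos hmin (by norm_num)
    calc (N:ℝ) ^ (-2/3 + s/2 : ℝ) * ((min n (N - n + 1) : ℕ) : ℝ) ^ (-1/3 : ℝ)
        ≤ (N:ℝ) ^ (-2/3 + s/2 : ℝ) * 1 :=
          mul_le_mul_of_nonneg_left hfac (Real.rpow_nonneg hNR0.le _)
      _ = (N:ℝ) ^ e := by rw [mul_one]
  -- quantile 1 bounds
  set h₁ : ℝ := (mpK2 d * N)⁻¹ ^ ((2:ℝ)/3) with hh₁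
  have hKN : (0:ℝ) < mpK2 d * N := by positivity
  have hh₁pos : 0 < h₁ := Real.rpow_pos_of_pos (by positivity) _
  have hh₁eq : h₁ = (mpK2 d)^(-(2/3):ℝ) * (N:ℝ)^(-(2/3):ℝ) := by
    rw [hh₁, mul_inv, Real.mul_rpow (inv_nonneg.2 hK2.le) (inv_nonneg.2 hNR0.le),
      Real.inv_rpow hK2.le, Real.inv_rpow hNR0.le,
      ← Real.rpow_neg hK2.le, ← Real.rpow_neg hNR0.le]
  have hh₁sd : h₁ ≤ Real.sqrt d := by
    rw [hh₁eq]
    have hstep : (mpK2 d)^(-(2/3):ℝ) * (N:ℝ)^(-(2/3):ℝ)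
        ≤ (mpK2 d)^(-(2/3):ℝ) * (Real.sqrt d * (mpK2 d) ^ ((2:ℝ)/3)) :=
      mul_le_mul_of_nonneg_left hP5 (Real.rpow_nonneg hK2.le _)
    refine le_trans hstep (le_of_eq ?_)
    rw [show (mpK2 d)^(-(2/3):ℝ) * (Real.sqrt d * (mpK2 d) ^ ((2:ℝ)/3))
        = Real.sqrt d * ((mpK2 d)^(-(2/3):ℝ) * (mpK2 d) ^ ((2:ℝ)/3)) by ring,
      ← Real.rpow_add hK2]
    norm_num
  have hge : 1/(N:ℝ) ≤ mpK2 d * (h₁ * Real.sqrt h₁) := by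
    have hsq : h₁ * Real.sqrt h₁ = ((mpK2 d * N)⁻¹) ^ ((2:ℝ)/3 * (3/2)) := by
      rw [Real.rpow_mul (inv_nonneg.2 hKN.le), ← hh₁, Real.sqrt_eq_rpow,
        show ((3:ℝ)/2) = 1 + 1/2 by norm_num, Real.rpow_add hh₁pos, Real.rpow_one]
    rw [hsq, show ((2:ℝ)/3 * (3/2)) = 1 by norm_num, Real.rpow_one, mul_inv,
      ← mul_assoc, mul_inv_cancel₀ (ne_of_gt hK2), one_mul, one_div]
  have hq1 := mpQ_one hd0 hd1 hN1 hh₁pos hh₁sd hge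
  -- λ₁ bounds
  have hrig1 := abs_le.1 (rig 1 le_rfl hN1)
  have hlam1low : 3 * mpL d / 4 ≤ E.lam 1 := by
    have := hq1.1; linarith [hrig1.1, hP2]
  have hlam1up : E.lam 1 ≤ mpL d + h₁ + (N:ℝ)^e := by
    have := hq1.2; linarith [hrig1.2]
  -- λ_N upper
  have hlamN : E.lam N ≤ 5 := by
    have hrigN := abs_le.1 (rig N hN1 le_rfl)
    by_cases hne : {t' : ℝ | mpF d t' = (N:ℝ)/N}.Nonempty
    · have := mpQ_le_U hd0 hd1 hN1 hN1 hne
      linarith [hrigN.2, hP3]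
    · have h0 := mpQ_empty hd0 hne
      rw [h0] at hrigN
      linarith [hrigN.2, hP3]
  -- Δ₂, δ₂ basics
  have h42 := h4 2 (by simp)
  have hΔ2l : (N:ℝ)^(-2/3-s/2:ℝ) ≤ E.Δ 2 := h42.1
  have hΔ2pos : 0 < E.Δ 2 := lt_of_lt_of_le (Real.rpow_pos_of_pos hNR0 _) hΔ2l
  have hΔ2u : E.Δ 2 ≤ (N:ℝ)^e := h42.2
  have hlam2 : E.lam 1 ≤ E.lam 2 := E.lam_mono 1 2 le_rfl one_le_two hN2
  have hlam2pos : 0 < E.lam 2 := lt_of_lt_of_le hlam1 hlam2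
  have hδ2pos : 0 < E.δ 2 := by
    have : E.δ 2 = E.lam 1^2 / E.lam 2^2 := rfl
    rw [this]; positivity
  have hδpos : ∀ n, 2 ≤ n → n ≤ N → 0 < E.δ n := by
    intro n h2n hnN
    have hlamn : 0 < E.lam n := lt_of_lt_of_le hlam1 (hlammono n h2n hnN)
    have : E.δ n = E.lam 1^2 / E.lam n^2 := rfl
    rw [this]; positivity
  have hδle : ∀ n, 2 ≤ n → n ≤ N → E.δ n ≤ E.δ 2 := by
    intro n h2n hnN
    have hlamn : E.lam 2 ≤ E.lam n := E.lam_mono 2 n one_le_two h2n hnN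
    have hsq : E.lam 2^2 ≤ E.lam n^2 := pow_le_pow_left₀ hlam2pos.le hlamn 2
    exact div_le_div_of_nonneg_left (sq_nonneg _) (by positivity) hsq
  -- ν facts
  have hνnonneg : ∀ n, 0 ≤ E.ν n := by
    intro n
    have : E.ν n = E.beta n^2 / E.beta 1^2 := rfl
    rw [this]; positivity
  have hβ1 := h1 1 (Finset.mem_Icc.2 ⟨le_rfl, hN1⟩)
  have hβ1l := h2 1 (by simp)
  have hβ2l := h2 2 (by simp)
  have sq_rpow : ∀ a : ℝ, ((N:ℝ)^(a:ℝ))^(2:ℕ) = (N:ℝ)^(a*2) := by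
    intro a
    rw [← Real.rpow_natCast ((N:ℝ)^(a:ℝ)) 2, ← Real.rpow_mul hNR0.le]
    norm_num
  have hβ1sq : (N:ℝ)^(-1-s:ℝ) ≤ E.beta 1^2 := by
    have := pow_le_pow_left₀ (Real.rpow_nonneg hNR0.le _) hβ1l 2
    rwa [sq_rpow, show (-1/2-s/2)*2 = -1-s by ring] at this
  have hβ1sq' : E.beta 1^2 ≤ (N:ℝ)^(-1+s:ℝ) := by
    have := pow_le_pow_left₀ (E.beta_nonneg 1 le_rfl hN1) hβ1 2
    rwa [sq_rpow, show (-1/2+s/2)*2 = -1+s by ring] at this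
  have hν2 : (N:ℝ)^(-2*s : ℝ) ≤ E.ν 2 := by
    have hb2 : (N:ℝ)^(-1-s:ℝ) ≤ E.beta 2^2 := by
      have := pow_le_pow_left₀ (Real.rpow_nonneg hNR0.le _) hβ2l 2
      rwa [sq_rpow, show (-1/2-s/2)*2 = -1-s by ring] at this
    have hdiv : (N:ℝ)^(-1-s:ℝ)/(N:ℝ)^(-1+s:ℝ) ≤ E.beta 2^2 / E.beta 1^2 :=
      div_le_div₀ (sq_nonneg _) hb2 (pow_pos E.beta_one_pos 2) hβ1sq'
    have hEq : (N:ℝ)^(-1-s:ℝ)/(N:ℝ)^(-1+s:ℝ) = (N:ℝ)^(-2*s:ℝ) := by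
      rw [← Real.rpow_sub hNR0]; congr 1; ring
    rw [hEq] at hdiv
    exact hdiv
  have hνup : ∀ n, 1 ≤ n → n ≤ N → E.ν n ≤ (N:ℝ)^(2*s:ℝ) := by
    intro n h1n hnN
    have hbn : E.beta n^2 ≤ (N:ℝ)^(-1+s:ℝ) := by
      have := pow_le_pow_left₀ (E.beta_nonneg n h1n hnN) (h1 n (Finset.mem_Icc.2 ⟨h1n, hnN⟩)) 2
      rwa [sq_rpow, show (-1/2+s/2)*2 = -1+s by ring] at this
    have hdiv : E.beta n^2 / E.beta 1^2 ≤ (N:ℝ)^(-1+s:ℝ)/(N:ℝ)^(-1-s:ℝ) :=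
      div_le_div₀ (Real.rpow_nonneg hNR0.le _) hbn (Real.rpow_pos_of_pos hNR0 _) hβ1sq
    have hEq : (N:ℝ)^(-1+s:ℝ)/(N:ℝ)^(-1-s:ℝ) = (N:ℝ)^(2*s:ℝ) := by
      rw [← Real.rpow_sub hNR0]; congr 1; ring
    rw [hEq] at hdiv
    exact hdiv
  have hνsum : ∑ n ∈ Finset.Icc 2 N, E.ν n ≤ (N:ℝ)^(1+s:ℝ) := by
    have hsub : ∑ n ∈ Finset.Icc 2 N, E.beta n^2 ≤ 1 := by
      rw [← E.beta_norm]
      exact Finset.sum_le_sum_of_subset_of_nonneg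
        (Finset.Icc_subset_Icc (by norm_num) le_rfl) (fun i _ _ => sq_nonneg _)
    have hEq : ∑ n ∈ Finset.Icc 2 N, E.ν n
        = (∑ n ∈ Finset.Icc 2 N, E.beta n^2) / E.beta 1^2 := by
      rw [Finset.sum_div]; rfl
    rw [hEq]
    calc (∑ n ∈ Finset.Icc 2 N, E.beta n^2) / E.beta 1^2
        ≤ 1 / (N:ℝ)^(-1-s:ℝ) :=
          div_le_div₀ (by positivity) hsub (Real.rpow_pos_of_pos hNR0 _) hβ1sq
      _ = (N:ℝ)^(1+s:ℝ) := by
          rw [one_div, ← Real.rpow_neg hNR0.le]; congr 1; ring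
  -- nonnegativity of terms
  have hterm_nonneg : ∀ n ∈ Finset.Icc 2 N, 0 ≤ E.ν n * E.Δ n ^ j * E.δ n ^ t := by
    intro n hn
    obtain ⟨h2n, hnN⟩ := Finset.mem_Icc.1 hn
    have hΔ : 0 ≤ E.Δ n := sub_nonneg.2 (hlammono n h2n hnN)
    have hδ : 0 < E.δ n := hδpos n h2n hnN
    have hν := hνnonneg n
    positivity
  constructor
  · -- lower bound
    have h2mem : 2 ∈ Finset.Icc 2 N := Finset.mem_Icc.2 ⟨le_rfl, hN2⟩
    refine le_trans ?_ (Finset.single_le_sum hterm_nonneg h2mem)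
    have hnn : (0:ℝ) ≤ E.Δ 2^j * E.δ 2^t := by positivity
    calc (N:ℝ)^(-2*s) * E.Δ 2^j * E.δ 2^t
        = (N:ℝ)^(-2*s:ℝ) * (E.Δ 2^j * E.δ 2^t) := by ring
      _ ≤ E.ν 2 * (E.Δ 2^j * E.δ 2^t) := mul_le_mul_of_nonneg_right hν2 hnn
      _ = E.ν 2 * E.Δ 2^j * E.δ 2^t := by ring
  · -- upper bound
    classical
    set A := (Finset.Icc 2 N).filter (fun n => E.δ 2 ^ (p:ℝ) ≤ E.δ n) with hA
    set B := (Finset.Icc 2 N).filter (fun n => ¬ (E.δ 2 ^ (p:ℝ) ≤ E.δ n)) with hB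
    have hsplit : ∑ n ∈ Finset.Icc 2 N, E.ν n * E.Δ n ^ j * E.δ n ^ t
        = (∑ n ∈ A, E.ν n * E.Δ n ^ j * E.δ n ^ t)
          + ∑ n ∈ B, E.ν n * E.Δ n ^ j * E.δ n ^ t :=
      (Finset.sum_filter_add_sum_filter_not _ _ _).symm
    -- key eigenvalue bound on A
    have hkey : ∀ n ∈ A, E.lam n ≤ E.lam 1 + 3 * p * E.Δ 2 := by
      intro n hnA
      obtain ⟨hmem, hyp⟩ := Finset.mem_filter.1 hnA
      obtain ⟨h2n, hnN⟩ := Finset.mem_Icc.1 hmem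
      have hlamn : 0 < E.lam n := lt_of_lt_of_le hlam1 (hlammono n h2n hnN)
      have hyp' : (E.lam 1^2/E.lam 2^2 : ℝ) ^ (p:ℝ) ≤ E.lam 1^2/E.lam n^2 := hyp
      have hx := lam_bound hlam1 hlam2pos hlamn hp0.le hyp'
      have hq : E.lam 2 / E.lam 1 = 1 + E.Δ 2 / E.lam 1 := by
        have : E.Δ 2 = E.lam 2 - E.lam 1 := rfl
        rw [this]; field_simp; ring
      have hr0 : 0 ≤ E.Δ 2 / E.lam 1 := div_nonneg hΔ2pos.le hlam1.le
      have hpr : p * (E.Δ 2 / E.lam 1) ≤ 1 := by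
        have h9 : p * E.Δ 2 ≤ 3 * mpL d / 4 := by
          have ha : p * E.Δ 2 ≤ p * (N:ℝ)^e := mul_le_mul_of_nonneg_left hΔ2u hp0.le
          have hb : p * (N:ℝ)^e ≤ 3 * mpL d / 4 := by
            rw [mul_comm, ← le_div_iff₀ hp0]; exact hP4
          exact le_trans ha hb
        rw [← mul_div_assoc]
        exact (div_le_one hlam1).2 (le_trans h9 hlam1low)
      have hrp := rpow_one_add_le hr0 hp0.le hpr
      rw [← hq] at hrp
      have hfinal : E.lam 1 * (E.lam 2 / E.lam 1) ^ (p:ℝ)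
          ≤ E.lam 1 * (1 + 3 * (p * (E.Δ 2 / E.lam 1))) :=
        mul_le_mul_of_nonneg_left hrp hlam1.le
      have heq2 : E.lam 1 * (1 + 3 * (p * (E.Δ 2 / E.lam 1))) = E.lam 1 + 3 * p * E.Δ 2 := by
        field_simp
      rw [heq2] at hfinal
      exact le_trans hx hfinal
    -- termwise bound on A
    have hAterm : ∀ n ∈ A, E.ν n * E.Δ n ^ j * E.δ n ^ t
        ≤ (N:ℝ)^(2*s:ℝ) * ((3*p)^3 * E.Δ 2^j) * E.δ 2^t := by
      intro n hnA
      obtain ⟨hmem, _⟩ := Finset.mem_filter.1 hnA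
      obtain ⟨h2n, hnN⟩ := Finset.mem_Icc.1 hmem
      have h1n : 1 ≤ n := le_trans one_le_two h2n
      have hΔn0 : 0 ≤ E.Δ n := sub_nonneg.2 (hlammono n h2n hnN)
      have hΔn : E.Δ n ≤ 3 * p * E.Δ 2 := by
        have := hkey n hnA
        have hEq : E.Δ n = E.lam n - E.lam 1 := rfl
        rw [hEq]; linarith
      have hΔnj : E.Δ n^j ≤ (3*p)^3 * E.Δ 2^j := by
        calc E.Δ n^j ≤ (3*p*E.Δ 2)^j := pow_le_pow_left₀ hΔn0 hΔn j
          _ = (3*p)^j * E.Δ 2^j := mul_pow _ _ _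
          _ ≤ (3*p)^3 * E.Δ 2^j := by
              apply mul_le_mul_of_nonneg_right _ (pow_nonneg hΔ2pos.le j)
              exact pow_le_pow_right₀ (by linarith) hj
      have hδnt : E.δ n^t ≤ E.δ 2^t :=
        Real.rpow_le_rpow (hδpos n h2n hnN).le (hδle n h2n hnN) ht
      have hb1 : E.ν n * E.Δ n^j ≤ (N:ℝ)^(2*s:ℝ) * ((3*p)^3 * E.Δ 2^j) :=
        mul_le_mul (hνup n h1n hnN) hΔnj (pow_nonneg hΔn0 j) (Real.rpow_nonneg hNR0.le _)
      exact mul_le_mul hb1 hδnt (Real.rpow_nonneg (hδpos n h2n hnN).le t) (by positivity)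
    -- count bound on A
    have hAcount : ∀ n ∈ A, (n:ℝ) ≤ mpK1 d * D^((3:ℝ)/2) * (N:ℝ)^(3*s/4 : ℝ) := by
      intro n hnA
      obtain ⟨hmem, _⟩ := Finset.mem_filter.1 hnA
      obtain ⟨h2n, hnN⟩ := Finset.mem_Icc.1 hmem
      have h1n : 1 ≤ n := le_trans one_le_two h2n
      have hlamn1 : E.lam 1 ≤ E.lam n := hlammono n h2n hnN
      have hne : {t' : ℝ | mpF d t' = (n:ℝ)/N}.Nonempty := by
        by_contra hcon
        have h0 := mpQ_empty hd0 hcon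
        have habs := abs_le.1 (rig n h1n hnN)
        rw [h0] at habs
        have h6 := habs.2
        linarith [hP2, hlam1low, hL]
      obtain ⟨t', hFt', hLt', htlt⟩ := mpQ_near hd0 hd1 h1n hN1 hne
        (Real.rpow_pos_of_pos hNR0 (-(2/3) : ℝ))
      have hγn : mpQuantile d N n ≤ E.lam n + (N:ℝ)^e := by
        have := abs_le.1 (rig n h1n hnN); linarith [this.1]
      set w := t' - mpL d with hw
      have hw0 : 0 ≤ w := by rw [hw]; linarith [hLt']
      have hwle : w ≤ D * (N:ℝ)^e := by
        have hm1 : (N:ℝ)^(-(2/3):ℝ) ≤ (N:ℝ)^e :=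
          Real.rpow_le_rpow_of_exponent_le hNR1 (by rw [he]; linarith)
        have hm2 : h₁ ≤ (mpK2 d)^(-(2/3):ℝ) * (N:ℝ)^e := by
          rw [hh₁eq]
          exact mul_le_mul_of_nonneg_left hm1 (Real.rpow_nonneg hK2.le _)
        have h3p : 3*p*E.Δ 2 ≤ (3+3*c) * (N:ℝ)^e := by
          have := mul_le_mul_of_nonneg_left hΔ2u (show (0:ℝ) ≤ 3*p by linarith)
          calc 3*p*E.Δ 2 ≤ 3*p*(N:ℝ)^e := this
            _ = (3+3*c) * (N:ℝ)^e := by rw [hp]; ring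
        have hkn := hkey n hnA
        rw [hD, hw]
        linarith [htlt, hγn, hkn, hlam1up, h3p, hm1, hm2]
      have hFub := mpF_upper hd0 hd1 hw0
      have hFt'' : mpF d t' = mpF d (mpL d + w) := by
        rw [hw, show mpL d + (t' - mpL d) = t' by ring]
      have hnN' : (n:ℝ)/N ≤ mpK1 d * (w * Real.sqrt w) := by
        rw [← hFt', hFt'']
        exact hFub
      have hws : w * Real.sqrt w ≤ (D*(N:ℝ)^e) * Real.sqrt (D*(N:ℝ)^e) :=
        mul_le_mul hwle (Real.sqrt_le_sqrt hwle) (Real.sqrt_nonneg w) (by positivity)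
      have hsplit2 : (D*(N:ℝ)^e) * Real.sqrt (D*(N:ℝ)^e)
          = D^((3:ℝ)/2) * (N:ℝ)^(e*(3/2):ℝ) := by
        rw [Real.sqrt_mul hD0.le, Real.sqrt_eq_rpow, Real.sqrt_eq_rpow,
          ← Real.rpow_mul hNR0.le]
        rw [show D * (N:ℝ)^e * (D^((1:ℝ)/2) * (N:ℝ)^(e*(1/2)))
            = (D * D^((1:ℝ)/2)) * ((N:ℝ)^e * (N:ℝ)^(e*(1/2))) by ring]
        rw [← Real.rpow_add hNR0, show e + e*(1/2) = e*(3/2) by ring]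
        congr 1
        nth_rewrite 1 [show D = D^(1:ℝ) by rw [Real.rpow_one]]
        rw [← Real.rpow_add hD0]
        norm_num
      have hfin : (n:ℝ)/N ≤ mpK1 d * (D^((3:ℝ)/2) * (N:ℝ)^(e*(3/2):ℝ)) := by
        refine le_trans hnN' ?_
        rw [← hsplit2]
        exact mul_le_mul_of_nonneg_left hws hK1.le
      have hstep := (div_le_iff₀ hNR0).1 hfin
      refine le_trans hstep (le_of_eq ?_)
      have hNsum : (N:ℝ)^(e*(3/2):ℝ) * (N:ℝ) = (N:ℝ)^(3*s/4:ℝ) := by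
        nth_rewrite 2 [show (N:ℝ) = (N:ℝ)^(1:ℝ) by rw [Real.rpow_one]]
        rw [← Real.rpow_add hNR0]
        congr 1
        rw [he]; ring
      calc mpK1 d * (D^((3:ℝ)/2) * (N:ℝ)^(e*(3/2):ℝ)) * (N:ℝ)
          = mpK1 d * D^((3:ℝ)/2) * ((N:ℝ)^(e*(3/2):ℝ) * (N:ℝ)) := by ring
        _ = mpK1 d * D^((3:ℝ)/2) * (N:ℝ)^(3*s/4:ℝ) := by rw [hNsum]
    -- A sum bound
    have hC2pos : 0 < mpK1 d * D^((3:ℝ)/2) * (N:ℝ)^(3*s/4:ℝ) := by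
      have : 0 < D ^ ((3:ℝ)/2) := Real.rpow_pos_of_pos hD0 _
      have : 0 < (N:ℝ)^(3*s/4:ℝ) := Real.rpow_pos_of_pos hNR0 _
      positivity
    have hAsum : ∑ n ∈ A, E.ν n * E.Δ n ^ j * E.δ n ^ t
        ≤ C1 * (N:ℝ)^(4*s:ℝ) * E.Δ 2^j * E.δ 2^t := by
      set u := (N:ℝ)^(2*s:ℝ) * ((3*p)^3 * E.Δ 2^j) * E.δ 2^t with hu
      have hu0 : 0 ≤ u := by
        have h0 : 0 ≤ E.Δ 2^j := pow_nonneg hΔ2pos.le j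
        have h1' : 0 ≤ E.δ 2^t := Real.rpow_nonneg hδ2pos.le t
        have h2' : 0 ≤ (N:ℝ)^(2*s:ℝ) := Real.rpow_nonneg hNR0.le _
        rw [hu]; positivity
      have hsum1 : ∑ n ∈ A, E.ν n * E.Δ n ^ j * E.δ n ^ t ≤ A.card • u :=
        Finset.sum_le_card_nsmul A _ u hAterm
      set m := Nat.floor (mpK1 d * D^((3:ℝ)/2) * (N:ℝ)^(3*s/4:ℝ)) with hm
      have hsubA : A ⊆ Finset.Icc 2 m := by
        intro n hnA
        exact Finset.mem_Icc.2 ⟨(Finset.mem_Icc.1 (Finset.mem_filter.1 hnA).1).1,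
          Nat.le_floor (hAcount n hnA)⟩
      have hcard : (A.card : ℝ) ≤ mpK1 d * D^((3:ℝ)/2) * (N:ℝ)^(3*s/4:ℝ) := by
        have hc1 : A.card ≤ m := by
          refine le_trans (Finset.card_le_card hsubA) ?_
          rw [Nat.card_Icc]; omega
        refine le_trans (show (A.card:ℝ) ≤ (m:ℝ) by exact_mod_cast hc1) ?_
        exact Nat.floor_le hC2pos.le
      have hNcomb : (N:ℝ)^(3*s/4:ℝ) * (N:ℝ)^(2*s:ℝ) = (N:ℝ)^(3*s/4+2*s:ℝ) :=
        (Real.rpow_add hNR0 _ _).symm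
      have hNle : (N:ℝ)^(3*s/4+2*s:ℝ) ≤ (N:ℝ)^(4*s:ℝ) :=
        Real.rpow_le_rpow_of_exponent_le hNR1 (by linarith)
      calc ∑ n ∈ A, E.ν n * E.Δ n ^ j * E.δ n ^ t
          ≤ A.card • u := hsum1
        _ = (A.card : ℝ) * u := nsmul_eq_mul _ _
        _ ≤ (mpK1 d * D^((3:ℝ)/2) * (N:ℝ)^(3*s/4:ℝ)) * u :=
            mul_le_mul_of_nonneg_right hcard hu0
        _ = (mpK1 d * D^((3:ℝ)/2) * (3*p)^3) * ((N:ℝ)^(3*s/4:ℝ) * (N:ℝ)^(2*s:ℝ))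
            * (E.Δ 2^j * E.δ 2^t) := by rw [hu]; ring
        _ = C1 * (N:ℝ)^(3*s/4+2*s:ℝ) * (E.Δ 2^j * E.δ 2^t) := by rw [hNcomb, hC1]
        _ ≤ C1 * (N:ℝ)^(4*s:ℝ) * (E.Δ 2^j * E.δ 2^t) := by
            apply mul_le_mul_of_nonneg_right
              (mul_le_mul_of_nonneg_left hNle hC1pos.le) (by positivity)
        _ = C1 * (N:ℝ)^(4*s:ℝ) * E.Δ 2^j * E.δ 2^t := by ring
    -- B sum bound
    have hBterm : ∀ n ∈ B, E.ν n * E.Δ n ^ j * E.δ n ^ t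
        ≤ E.ν n * (125 * (E.δ 2^t * E.δ 2^(c*t))) := by
      intro n hnB
      obtain ⟨hmem, hyp⟩ := Finset.mem_filter.1 hnB
      obtain ⟨h2n, hnN⟩ := Finset.mem_Icc.1 hmem
      have h1n : 1 ≤ n := le_trans one_le_two h2n
      have hδn_lt : E.δ n ≤ E.δ 2^(p:ℝ) := (lt_of_not_ge hyp).le
      have hδnt : E.δ n^t ≤ (E.δ 2^(p:ℝ))^t :=
        Real.rpow_le_rpow (hδpos n h2n hnN).le hδn_lt ht
      have hsplitp : (E.δ 2^(p:ℝ))^t = E.δ 2^t * E.δ 2^(c*t) := by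
        rw [← Real.rpow_mul hδ2pos.le, show p*t = t + c*t by rw [hp]; ring,
          Real.rpow_add hδ2pos]
      have hΔn0 : 0 ≤ E.Δ n := sub_nonneg.2 (hlammono n h2n hnN)
      have hΔ5 : E.Δ n ≤ 5 := by
        have hlamn : E.lam n ≤ E.lam N := E.lam_mono n N h1n hnN le_rfl
        have : E.Δ n = E.lam n - E.lam 1 := rfl
        rw [this]; linarith
      have hΔj : E.Δ n^j ≤ 125 := by
        calc E.Δ n^j ≤ 5^j := pow_le_pow_left₀ hΔn0 hΔ5 j
          _ ≤ 5^3 := pow_le_pow_right₀ (by norm_num) hj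
          _ = 125 := by norm_num
      have hb1 : E.ν n * E.Δ n^j ≤ E.ν n * 125 :=
        mul_le_mul_of_nonneg_left hΔj (hνnonneg n)
      have hb2 : E.δ n^t ≤ E.δ 2^t * E.δ 2^(c*t) := by rw [← hsplitp]; exact hδnt
      calc E.ν n * E.Δ n^j * E.δ n^t
          ≤ (E.ν n * 125) * (E.δ 2^t * E.δ 2^(c*t)) :=
            mul_le_mul hb1 hb2 (Real.rpow_nonneg (hδpos n h2n hnN).le t)
              (mul_nonneg (hνnonneg n) (by norm_num))
        _ = E.ν n * (125 * (E.δ 2^t * E.δ 2^(c*t))) := by ring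
    have hBsum : ∑ n ∈ B, E.ν n * E.Δ n ^ j * E.δ n ^ t
        ≤ 125 * (N:ℝ)^(1+s:ℝ) * (E.δ 2^t * E.δ 2^(c*t)) := by
      have hstep1 : ∑ n ∈ B, E.ν n * E.Δ n ^ j * E.δ n ^ t
          ≤ ∑ n ∈ B, E.ν n * (125 * (E.δ 2^t * E.δ 2^(c*t))) :=
        Finset.sum_le_sum hBterm
      have hstep2 : ∑ n ∈ B, E.ν n * (125 * (E.δ 2^t * E.δ 2^(c*t)))
          = (∑ n ∈ B, E.ν n) * (125 * (E.δ 2^t * E.δ 2^(c*t))) :=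
        (Finset.sum_mul _ _ _).symm
      have hBν : ∑ n ∈ B, E.ν n ≤ (N:ℝ)^(1+s:ℝ) := by
        refine le_trans ?_ hνsum
        exact Finset.sum_le_sum_of_subset_of_nonneg (Finset.filter_subset _ _)
          (fun i _ _ => hνnonneg i)
      have hfac : (0:ℝ) ≤ 125 * (E.δ 2^t * E.δ 2^(c*t)) := by
        have h1' : 0 ≤ E.δ 2^t := Real.rpow_nonneg hδ2pos.le t
        have h2' : 0 ≤ E.δ 2^(c*t) := Real.rpow_nonneg hδ2pos.le _
        positivity
      calc ∑ n ∈ B, E.ν n * E.Δ n ^ j * E.δ n ^ t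
          ≤ (∑ n ∈ B, E.ν n) * (125 * (E.δ 2^t * E.δ 2^(c*t))) := by
            rw [← hstep2]; exact hstep1
        _ ≤ (N:ℝ)^(1+s:ℝ) * (125 * (E.δ 2^t * E.δ 2^(c*t))) :=
            mul_le_mul_of_nonneg_right hBν hfac
        _ = 125 * (N:ℝ)^(1+s:ℝ) * (E.δ 2^t * E.δ 2^(c*t)) := by ring
    -- combine
    rw [hsplit]
    have ht1 : (0:ℝ) ≤ (N:ℝ)^(4*s) * E.Δ 2^j * E.δ 2^t := by
      have h0 : 0 ≤ E.Δ 2^j := pow_nonneg hΔ2pos.le j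
      have h1' : 0 ≤ E.δ 2^t := Real.rpow_nonneg hδ2pos.le t
      have h2' : 0 ≤ (N:ℝ)^(4*s:ℝ) := Real.rpow_nonneg hNR0.le _
      positivity
    have ht2 : (0:ℝ) ≤ (N:ℝ)^(1+s:ℝ) * (E.δ 2^t * E.δ 2^(c*t)) := by
      have h1' : 0 ≤ E.δ 2^t := Real.rpow_nonneg hδ2pos.le t
      have h2' : 0 ≤ E.δ 2^(c*t) := Real.rpow_nonneg hδ2pos.le _
      have h3' : 0 ≤ (N:ℝ)^(1+s:ℝ) := Real.rpow_nonneg hNR0.le _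
      positivity
    have htarget : C1 * (N:ℝ)^(4*s:ℝ) * E.Δ 2^j * E.δ 2^t
          + 125 * (N:ℝ)^(1+s:ℝ) * (E.δ 2^t * E.δ 2^(c*t))
        ≤ (C1 + 125) * E.δ 2^t
          * ((N:ℝ)^(4*s) * E.Δ 2^j + (N:ℝ)^(1+s) * E.δ 2^(c*t)) := by
      have hdiff : (C1 + 125) * E.δ 2^t
            * ((N:ℝ)^(4*s) * E.Δ 2^j + (N:ℝ)^(1+s) * E.δ 2^(c*t))
          - (C1 * (N:ℝ)^(4*s:ℝ) * E.Δ 2^j * E.δ 2^t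
            + 125 * (N:ℝ)^(1+s:ℝ) * (E.δ 2^t * E.δ 2^(c*t)))
          = 125 * ((N:ℝ)^(4*s) * E.Δ 2^j * E.δ 2^t)
            + C1 * ((N:ℝ)^(1+s:ℝ) * (E.δ 2^t * E.δ 2^(c*t))) := by ring
      have hg1 : (0:ℝ) ≤ 125 * ((N:ℝ)^(4*s) * E.Δ 2^j * E.δ 2^t) :=
        mul_nonneg (by norm_num) ht1
      have hg2 : (0:ℝ) ≤ C1 * ((N:ℝ)^(1+s:ℝ) * (E.δ 2^t * E.δ 2^(c*t))) :=
        mul_nonneg hC1pos.le ht2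
      linarith [hdiff, hg1, hg2]
    exact le_trans (add_le_add hAsum hBsum) htarget
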